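/- arXiv:1407.4372 — 3 statements merged into one kernel-verified Lean document; each statement's English description precedes it below -/
import Mathlib

section
/- Let d ≥ 1, let W be the closed unit ball of ℝ^d and let θ > 0. Let f₀ ∈ ℝ and for every n ≥ 1 let fₙ : Wⁿ → ℝ be the restriction to Wⁿ of a continuously differentiable function on (ℝ^d)ⁿ, symmetric under permutations of its n arguments, satisfying the compatibility conditions f₁(z) = f₀ whenever ‖z‖ = 1 and fₙ₊₁(z₁,…,zₙ,z) = fₙ(z₁,…,zₙ) whenever ‖z‖ = 1, and suppose there is C > 1 such that for all n, ‖fₙ‖_∞ + Σᵢ₌₁ⁿ ‖∇_{xᵢ} fₙ‖_∞ ≤ Cⁿ. Let 𝒱 : ℝ^d → ℝ^d be continuously differentiable. Then both of the following series converge absolutely and are equal: −Σ_{n≥1} (θⁿ/n!) ∫_{Wⁿ} Σᵢ₌₁ⁿ ∇_{zᵢ} fₙ(z₁,…,zₙ)·𝒱(zᵢ) dz₁…dzₙ = Σ_{n≥0} (θⁿ/n!) ∫_{Wⁿ} fₙ(z₁,…,zₙ) [ Σᵢ₌₁ⁿ (div 𝒱)(zᵢ) − θ ∫_W (div 𝒱)(u)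 du ] dz₁…dzₙ (the n = 0 term on the right being f₀ · (−θ ∫_W (div 𝒱)(u) du)). This is the integration-by-parts (duality) formula E[∫_W D_x F · V(x) dx] = E[F δ(V)] of Theorem 3.1 expressed through the form functions of a Poisson functional. -/
open MeasureTheory

noncomputable section

/-- The (weak) divergence of a vector field `V : ℝ^d → ℝ^d`, computed as the trace of its
derivative. -/
def divergence {d : ℕ} (V : EuclideanSpace ℝ (Fin d) → EuclideanSpace ℝ (Fin d))
    (u : EuclideanSpace ℝ (Fin d)) : ℝ :=
  ∑ m : Fin d, fderiv ℝ V u (EuclideanSpace.single m 1) m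

/-- The closed unit ball `W` of `ℝ^d`. -/
def unitBallW (d : ℕ) : Set (EuclideanSpace ℝ (Fin d)) := Metric.closedBall 0 1

/-- The set `Wⁿ ⊆ (ℝ^d)ⁿ`. -/
def unitBallWn (d n : ℕ) : Set (Fin n → EuclideanSpace ℝ (Fin d)) :=
  Set.univ.pi fun _ => unitBallW d

/-- The continuous linear map `v ↦ (0,…,0,v,0,…,0)` (at slot `i`) from `ℝ^d` to `(ℝ^d)ⁿ`. -/
def slot {d n : ℕ} (i : Fin n) :
    EuclideanSpace ℝ (Fin d) →L[ℝ] (Fin n → EuclideanSpace ℝ (Fin d)) :=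
  ContinuousLinearMap.pi (Pi.single i (ContinuousLinearMap.id ℝ (EuclideanSpace ℝ (Fin d))))

abbrev Eu (d : ℕ) := EuclideanSpace ℝ (Fin d)

lemma slot_apply {d n : ℕ} (i : Fin n) (v : Eu d) : slot i v = Pi.single i v := by
  funext j
  rcases eq_or_ne j i with h | h
  · subst h; simp [slot, ContinuousLinearMap.pi_apply]
  · simp [slot, ContinuousLinearMap.pi_apply, Pi.single_apply, h]

lemma norm_le_one_iff {d : ℕ} (x : Eu d) : ‖x‖ ≤ 1 ↔ ∑ i, (x i) ^ 2 ≤ 1 := by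
  rw [EuclideanSpace.norm_eq]
  constructor
  · intro h
    have := Real.sqrt_le_sqrt (le_of_eq (rfl : ∑ i, ‖x i‖ ^2 = _))
    nlinarith [Real.sq_sqrt (Finset.sum_nonneg fun i _ => sq_nonneg ‖x i‖ : (0:ℝ) ≤ ∑ i, ‖x i‖ ^ 2),
      Real.sqrt_nonneg (∑ i, ‖x i‖ ^ 2), (by simp [sq_abs] : ∑ i : Fin d, ‖x i‖ ^ 2 = ∑ i, (x i) ^ 2)]
  · intro h
    have h2 : ∑ i : Fin d, ‖x i‖ ^ 2 = ∑ i, (x i) ^ 2 := by simp [sq_abs]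
    rw [h2]
    calc √(∑ i, x i ^ 2) ≤ √1 := Real.sqrt_le_sqrt h
    _ = 1 := Real.sqrt_one

lemma norm_eq_one_iff {d : ℕ} (x : Eu d) : ‖x‖ = 1 ↔ ∑ i, (x i) ^ 2 = 1 := by
  rw [EuclideanSpace.norm_eq]
  have h2 : ∑ i : Fin d, ‖x i‖ ^ 2 = ∑ i, (x i) ^ 2 := by simp [sq_abs]
  rw [h2]
  constructor
  · intro h
    nlinarith [Real.sq_sqrt (by positivity : (0:ℝ) ≤ ∑ i, (x i) ^ 2)]
  · intro h; rw [h, Real.sqrt_one]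

lemma euclid_decomp {d : ℕ} (v : Eu d) : v = ∑ m : Fin d, (v m) • EuclideanSpace.single m (1:ℝ) := by
  ext j
  have : (∑ m : Fin d, (v m) • EuclideanSpace.single m (1:ℝ)) j
      = ∑ m : Fin d, (v m) * (if j = m then 1 else 0) := by
    rw [WithLp.ofLp_sum, Finset.sum_apply]
    congr 1; funext m
    simp [EuclideanSpace.single_apply]
  rw [this]
  simp [Finset.sum_ite_eq]

lemma continuous_divergence {d : ℕ} {V : Eu d → Eu d} (hV : ContDiff ℝ 1 V) :
    Continuous (divergence V) := by
  refine continuous_finset_sum _ fun m _ => ?_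
  have h1 : Continuous fun u => fderiv ℝ V u (EuclideanSpace.single m 1) :=
    (hV.continuous_fderiv one_ne_zero).clm_apply continuous_const
  exact (EuclideanSpace.proj (𝕜 := ℝ) m).continuous.comp h1

lemma ftc_icc (phi phi' : ℝ → ℝ) (hd : ∀ t, HasDerivAt phi (phi' t) t) (hc : Continuous phi')
    (s : ℝ) (ha : phi s = 0) (hb : phi (-s) = 0) : ∫ t in Set.Icc (-s) s, phi' t = 0 := by
  rcases le_or_gt (-s) s with hle | hlt
  · rw [integral_Icc_eq_integral_Ioc, ← intervalIntegral.integral_of_le hle,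
      intervalIntegral.integral_eq_sub_of_hasDerivAt (fun x _ => hd x)
        (hc.intervalIntegrable _ _), ha, hb, sub_self]
  · rw [Set.Icc_eq_empty (by linarith : ¬(-s ≤ s))]; simp

section Slice
variable {k : ℕ}

lemma curve_eq (m : Fin (k+1)) (y : Fin k → ℝ) (t : ℝ) :
    (((MeasurableEquiv.toLp 2 (Fin (k+1) → ℝ)).symm).symm (Fin.insertNth m t y) : Eu (k+1))
      = ((MeasurableEquiv.toLp 2 (Fin (k+1) → ℝ)).symm).symm (Fin.insertNth m 0 y)
        + t • EuclideanSpace.single m (1:ℝ) := by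
  have hcoe : ∀ z : Fin (k+1) → ℝ, ∀ j,
      (((MeasurableEquiv.toLp 2 (Fin (k+1) → ℝ)).symm).symm z : Eu (k+1)) j = z j := fun z j => rfl
  ext j
  rw [PiLp.add_apply, PiLp.smul_apply, hcoe, hcoe]
  refine m.succAboveCases ?_ ?_ j
  · simp [Fin.insertNth_apply_same, EuclideanSpace.single_apply]
  · intro j'
    simp only [Fin.insertNth_apply_succAbove, EuclideanSpace.single_apply]
    rw [if_neg (Fin.succAbove_ne m j')]
    simp

lemma slice_zero (h : Eu (k+1) → ℝ) (hh : ContDiff ℝ 1 h)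
    (h0 : ∀ v : Eu (k+1), ‖v‖ = 1 → h v = 0) (m : Fin (k+1)) :
    ∫ v in Metric.closedBall (0 : Eu (k+1)) 1, fderiv ℝ h v (EuclideanSpace.single m 1) = 0 := by
  classical
  set eE := (MeasurableEquiv.toLp 2 (Fin (k+1) → ℝ)).symm with heE
  set eP := MeasurableEquiv.piFinSuccAbove (fun _ : Fin (k+1) => ℝ) m with heP
  set F : Eu (k+1) → ℝ := fun v => fderiv ℝ h v (EuclideanSpace.single m 1) with hF
  have hFcont : Continuous F := (hh.continuous_fderiv one_ne_zero).clm_apply continuous_const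
  set B : Set (Eu (k+1)) := Metric.closedBall 0 1 with hB
  -- transport through eE.symm
  have h1 : ∫ y in eE.symm ⁻¹' B, F (eE.symm y) = ∫ v in B, F v :=
    ((EuclideanSpace.volume_preserving_symm_measurableEquiv_toLp (Fin (k+1))).symm).setIntegral_preimage_emb
      eE.symm.measurableEmbedding F B
  -- transport through eP.symm
  have h2 : ∫ p in eP.symm ⁻¹' (eE.symm ⁻¹' B), F (eE.symm (eP.symm p))
      = ∫ y in eE.symm ⁻¹' B, F (eE.symm y) :=
    ((volume_preserving_piFinSuccAbove (fun _ : Fin (k+1) => ℝ) m).symm).setIntegral_preimage_emb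
      eP.symm.measurableEmbedding (fun y => F (eE.symm y)) (eE.symm ⁻¹' B)
  rw [← h1, ← h2]
  -- now an integral over ℝ × (Fin k → ℝ)
  set ι : ℝ × (Fin k → ℝ) → Eu (k+1) := fun p => eE.symm (Fin.insertNth m p.1 p.2) with hι
  have hsymmP : ∀ p : ℝ × (Fin k → ℝ), (eP.symm p : Fin (k+1) → ℝ) = Fin.insertNth m p.1 p.2 := by
    rintro ⟨t, y⟩; rfl
  have hΦeq : (fun p : ℝ × (Fin k → ℝ) => F (eE.symm (eP.symm p))) = fun p => F (ι p) := by
    funext p; rw [hsymmP]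
  set T : Set (ℝ × (Fin k → ℝ)) := eP.symm ⁻¹' (eE.symm ⁻¹' B) with hT
  have hTmem : ∀ p : ℝ × (Fin k → ℝ), p ∈ T ↔ p.1 ^ 2 + ∑ j, (p.2 j) ^ 2 ≤ 1 := by
    intro p
    have : (eE.symm (eP.symm p) : Eu (k+1)) ∈ B ↔ ‖(eE.symm (eP.symm p) : Eu (k+1))‖ ≤ 1 := by
      simp [hB, Metric.mem_closedBall, dist_zero_right]
    rw [hT, Set.mem_preimage, Set.mem_preimage, this, norm_le_one_iff]
    have hc : ∀ j, ((eE.symm (eP.symm p) : Eu (k+1)) j) = Fin.insertNth (α := fun _ => ℝ) m p.1 p.2 j := by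
      intro j; rw [hsymmP]; rfl
    have hsum : ∑ i, ((eE.symm (eP.symm p) : Eu (k+1)) i) ^ 2 = p.1 ^ 2 + ∑ j, (p.2 j) ^ 2 := by
      rw [Finset.sum_congr rfl fun j _ => by rw [hc]]
      have key := Fin.sum_univ_succAbove (M := ℝ) (n := k)
        (fun j => (Fin.insertNth (α := fun _ => ℝ) m p.1 p.2 j) ^ 2) m
      simp only [Fin.insertNth_apply_same, Fin.insertNth_apply_succAbove] at key
      exact key
    rw [hsum]
  -- rewrite integrand
  have hιcont : Continuous ι := by
    have h1 : Continuous (⇑eE.symm) := PiLp.continuous_toLp 2 (fun _ : Fin (k+1) => ℝ)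
    exact h1.comp (Continuous.finInsertNth (A := fun _ : Fin (k+1) => ℝ) m
      continuous_fst continuous_snd)
  have hTclosed : IsClosed T := by
    have : T = (fun p : ℝ × (Fin k → ℝ) => p.1 ^ 2 + ∑ j, (p.2 j) ^ 2) ⁻¹' Set.Iic 1 :=
      Set.ext fun p => hTmem p
    rw [this]
    exact IsClosed.preimage (by fun_prop) isClosed_Iic
  have hTmeas : MeasurableSet T := hTclosed.measurableSet
  have hTcompact : IsCompact T := by
    have h1 : Continuous (⇑eE) := PiLp.continuous_ofLp 2 (fun _ : Fin (k+1) => ℝ)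
    have h2 : Continuous (⇑eP) := by
      refine Continuous.prodMk (continuous_apply m) ?_
      exact continuous_pi fun j => continuous_apply _
    have himg : T = ⇑eP '' (⇑eE '' B) := by
      rw [hT]
      ext p
      simp only [Set.mem_preimage, Set.mem_image]
      constructor
      · intro hp
        exact ⟨eP.symm p, ⟨eE.symm (eP.symm p), hp, by simp⟩, by simp⟩
      · rintro ⟨z, ⟨x, hx, rfl⟩, rfl⟩
        simpa using hx
    rw [himg]
    exact ((isCompact_closedBall 0 1).image h1).image h2
  have hInt : IntegrableOn (fun p => F (ι p)) T := by
    exact (hFcont.comp hιcont).continuousOn.integrableOn_compact hTcompact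
  -- sum of squares of coordinates of ι
  have hsumsq : ∀ (t : ℝ) (y : Fin k → ℝ),
      ∑ i, ((ι (t, y) : Eu (k+1)) i) ^ 2 = t ^ 2 + ∑ j, (y j) ^ 2 := by
    intro t y
    have key := Fin.sum_univ_succAbove (M := ℝ) (n := k)
      (fun j => (Fin.insertNth (α := fun _ => ℝ) m t y j) ^ 2) m
    simp only [Fin.insertNth_apply_same, Fin.insertNth_apply_succAbove] at key
    exact key
  -- the inner integral vanishes for every y
  have hinner : ∀ y : Fin k → ℝ,
      ∫ t : ℝ, T.indicator (fun p => F (ι p)) (t, y) = 0 := by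
    intro y
    by_cases hy : ∑ j, (y j) ^ 2 ≤ 1
    · set s : ℝ := Real.sqrt (1 - ∑ j, (y j) ^ 2) with hsdef
      have hs0 : 0 ≤ s := Real.sqrt_nonneg _
      have hs2 : s ^ 2 = 1 - ∑ j, (y j) ^ 2 := Real.sq_sqrt (by linarith)
      have hset : ∀ t : ℝ, (t, y) ∈ T ↔ t ∈ Set.Icc (-s) s := by
        intro t
        rw [hTmem, Set.mem_Icc]
        constructor
        · intro ht
          have h1 : t ^ 2 ≤ s ^ 2 := by simp only at ht ⊢; linarith
          have h2 : |t| ≤ s := by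
            have := Real.sqrt_le_sqrt h1
            rwa [Real.sqrt_sq_eq_abs, Real.sqrt_sq hs0] at this
          exact abs_le.mp h2
        · rintro ⟨h1, h2⟩
          simp only
          nlinarith
      have hind : (fun t : ℝ => T.indicator (fun p => F (ι p)) (t, y))
          = (Set.Icc (-s) s).indicator (fun t => F (ι (t, y))) := by
        funext t
        by_cases ht : (t, y) ∈ T
        · rw [Set.indicator_of_mem ht, Set.indicator_of_mem ((hset t).mp ht)]
        · rw [Set.indicator_of_notMem ht,
            Set.indicator_of_notMem (fun hc => ht ((hset t).mpr hc))]
      rw [hind, integral_indicator measurableSet_Icc]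
      -- FTC
      have hnorm : ∀ t : ℝ, t ^ 2 + ∑ j, (y j) ^ 2 = 1 → ‖(ι (t, y) : Eu (k+1))‖ = 1 := by
        intro t ht
        rw [norm_eq_one_iff, hsumsq t y, ht]
      have hderiv : ∀ t : ℝ, HasDerivAt (fun t => h (ι (t, y))) (F (ι (t, y))) t := by
        intro t
        have hcurve : HasDerivAt (fun t : ℝ => (ι (t, y) : Eu (k+1)))
            (EuclideanSpace.single m (1:ℝ)) t := by
          have heq : (fun t : ℝ => (ι (t, y) : Eu (k+1)))
              = fun t => (ι (0, y) : Eu (k+1)) + t • EuclideanSpace.single m (1:ℝ) := by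
            funext t; exact curve_eq m y t
          rw [heq]
          simpa using ((hasDerivAt_id t).smul_const (EuclideanSpace.single m (1:ℝ))).const_add
            (ι (0, y) : Eu (k+1))
        have hh' := (hh.differentiable one_ne_zero (ι (t, y))).hasFDerivAt
        simpa [hF, Function.comp_def] using hh'.comp_hasDerivAt t hcurve
      refine ftc_icc (fun t => h (ι (t, y))) (fun t => F (ι (t, y))) hderiv
        (hFcont.comp (hιcont.comp (Continuous.prodMk_left y))) s ?_ ?_
      · exact h0 _ (hnorm s (by rw [hs2]; ring))
      · exact h0 _ (hnorm (-s) (by rw [neg_sq, hs2]; ring))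
    · have : ∀ t : ℝ, (t, y) ∉ T := by
        intro t ht
        rw [hTmem] at ht
        simp only at ht
        nlinarith [sq_nonneg t]
      have hzero : (fun t : ℝ => T.indicator (fun p => F (ι p)) (t, y)) = fun _ => 0 :=
        funext fun t => Set.indicator_of_notMem (this t) _
      rw [hzero]
      exact integral_zero _ _
  -- assemble
  calc ∫ p in T, F (eE.symm (eP.symm p))
      = ∫ p in T, F (ι p) := by
        refine setIntegral_congr_fun hTmeas fun p _ => ?_
        rw [hsymmP]
    _ = ∫ p, T.indicator (fun p => F (ι p)) p := (integral_indicator hTmeas).symm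
    _ = ∫ p, T.indicator (fun p => F (ι p)) p ∂((volume : Measure ℝ).prod volume) := by
        rw [← Measure.volume_eq_prod]
    _ = ∫ y, ∫ t, T.indicator (fun p => F (ι p)) (t, y) := by
        refine integral_prod_symm _ ?_
        rw [← Measure.volume_eq_prod, integrable_indicator_iff hTmeas]
        exact hInt
    _ = 0 := by simp only [hinner, integral_zero]

end Slice

section BallDiv
variable {k : ℕ}

lemma ball_div_thm (g : Eu (k+1) → ℝ) (hg : ContDiff ℝ 1 g) (c : ℝ)
    (hgc : ∀ v : Eu (k+1), ‖v‖ = 1 → g v = c)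
    (V : Eu (k+1) → Eu (k+1)) (hV : ContDiff ℝ 1 V) :
    ∫ v in Metric.closedBall (0 : Eu (k+1)) 1,
        (fderiv ℝ g v (V v) + g v * divergence V v)
      = c * ∫ u in Metric.closedBall (0 : Eu (k+1)) 1, divergence V u := by
  classical
  set B : Set (Eu (k+1)) := Metric.closedBall 0 1 with hB
  have hBc : IsCompact B := isCompact_closedBall 0 1
  set hm : Fin (k+1) → Eu (k+1) → ℝ := fun m v => (g v - c) * (V v m) with hhm
  have hVm : ∀ m : Fin (k+1), ContDiff ℝ 1 (fun v => V v m) := by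
    intro m
    exact (EuclideanSpace.proj (𝕜 := ℝ) m).contDiff.comp hV
  have hmC1 : ∀ m, ContDiff ℝ 1 (hm m) := fun m => (hg.sub contDiff_const).mul (hVm m)
  have hm0 : ∀ m, ∀ v : Eu (k+1), ‖v‖ = 1 → hm m v = 0 := by
    intro m v hv
    simp [hhm, hgc v hv]
  -- pointwise derivative formula
  have hder : ∀ (m : Fin (k+1)) (v : Eu (k+1)),
      fderiv ℝ (hm m) v (EuclideanSpace.single m 1)
        = (g v - c) * (fderiv ℝ V v (EuclideanSpace.single m 1) m)
          + (V v m) * (fderiv ℝ g v (EuclideanSpace.single m 1)) := by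
    intro m v
    have h1 : HasFDerivAt (fun v : Eu (k+1) => g v - c) (fderiv ℝ g v) v :=
      ((hg.differentiable one_ne_zero v).hasFDerivAt).sub_const c
    have h2 : HasFDerivAt (fun v : Eu (k+1) => V v m)
        ((EuclideanSpace.proj (𝕜 := ℝ) m).comp (fderiv ℝ V v)) v :=
      (EuclideanSpace.proj (𝕜 := ℝ) m).hasFDerivAt.comp v (hV.differentiable one_ne_zero v).hasFDerivAt
    have h3 : HasFDerivAt (hm m) ((g v - c) • (EuclideanSpace.proj (𝕜 := ℝ) m).comp (fderiv ℝ V v)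
        + (V v m) • fderiv ℝ g v) v := h1.mul h2
    rw [h3.fderiv]
    simp only [ContinuousLinearMap.add_apply, ContinuousLinearMap.smul_apply, smul_eq_mul,
      ContinuousLinearMap.coe_comp', Function.comp_apply, PiLp.proj_apply]
  -- pointwise identity
  have hpoint : ∀ v : Eu (k+1),
      fderiv ℝ g v (V v) + (g v - c) * divergence V v
        = ∑ m : Fin (k+1), fderiv ℝ (hm m) v (EuclideanSpace.single m 1) := by
    intro v
    rw [Finset.sum_congr rfl fun m _ => hder m v, Finset.sum_add_distrib, ← Finset.mul_sum]
    have hVsum : fderiv ℝ g v (V v)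
        = ∑ m : Fin (k+1), (V v m) * (fderiv ℝ g v (EuclideanSpace.single m 1)) := by
      conv_lhs => rw [euclid_decomp (V v)]
      rw [map_sum]
      exact Finset.sum_congr rfl fun m _ => by rw [(fderiv ℝ g v).map_smul, smul_eq_mul]
    rw [hVsum]
    unfold divergence
    ring
  -- integrability
  have cont1 : Continuous fun v : Eu (k+1) => fderiv ℝ g v (V v) :=
    (hg.continuous_fderiv one_ne_zero).clm_apply hV.continuous
  have contdiv : Continuous (divergence V) := continuous_divergence hV
  have int1 : IntegrableOn (fun v => fderiv ℝ g v (V v) + (g v - c) * divergence V v) B :=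
    ((cont1.add (((hg.continuous).sub continuous_const).mul contdiv)).continuousOn).integrableOn_compact hBc
  have int2 : IntegrableOn (fun v => c * divergence V v) B :=
    ((continuous_const.mul contdiv).continuousOn).integrableOn_compact hBc
  -- main zero identity
  have hzero : ∫ v in B, (fderiv ℝ g v (V v) + (g v - c) * divergence V v) = 0 := by
    have : ∫ v in B, (fderiv ℝ g v (V v) + (g v - c) * divergence V v)
        = ∑ m : Fin (k+1), ∫ v in B, fderiv ℝ (hm m) v (EuclideanSpace.single m 1) := by
      rw [← integral_finset_sum]
      · exact setIntegral_congr_fun hBc.isClosed.measurableSet fun v _ => hpoint v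
      · intro m _
        exact ((((hmC1 m).continuous_fderiv one_ne_zero).clm_apply
          continuous_const).continuousOn).integrableOn_compact hBc
    rw [this]
    refine Finset.sum_eq_zero fun m _ => ?_
    exact slice_zero (hm m) (hmC1 m) (hm0 m) m
  -- assemble
  have hsplit : ∀ v : Eu (k+1), fderiv ℝ g v (V v) + g v * divergence V v
      = (fderiv ℝ g v (V v) + (g v - c) * divergence V v) + c * divergence V v := by
    intro v; ring
  rw [setIntegral_congr_fun hBc.isClosed.measurableSet fun v _ => hsplit v,
    integral_add int1 int2, hzero, zero_add, integral_const_mul]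

end BallDiv

section LastCoord
variable {d : ℕ}

lemma ball_div_thm' (hd : 1 ≤ d) (g : Eu d → ℝ) (hg : ContDiff ℝ 1 g) (c : ℝ)
    (hgc : ∀ v : Eu d, ‖v‖ = 1 → g v = c)
    (V : Eu d → Eu d) (hV : ContDiff ℝ 1 V) :
    ∫ v in unitBallW d, (fderiv ℝ g v (V v) + g v * divergence V v)
      = c * ∫ u in unitBallW d, divergence V u := by
  obtain ⟨k, rfl⟩ : ∃ k, d = k + 1 := ⟨d - 1, (Nat.succ_pred_eq_of_pos hd).symm⟩
  exact ball_div_thm g hg c hgc V hV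

lemma snoc_eq_add {k : ℕ} (w : Fin k → Eu d) (v : Eu d) :
    (Fin.snoc w v : Fin (k+1) → Eu d) = Fin.snoc w 0 + slot (Fin.last k) v := by
  funext j
  rw [slot_apply]
  refine Fin.lastCases ?_ ?_ j
  · simp [Fin.snoc_last]
  · intro j'
    have hne : (Fin.castSucc j' : Fin (k+1)) ≠ Fin.last k := Fin.ne_of_lt (Fin.castSucc_lt_last j')
    simp [Fin.snoc_castSucc, Pi.single_apply, hne]

lemma continuous_snoc {k : ℕ} : Continuous fun p : Eu d × (Fin k → Eu d) =>
    (Fin.snoc p.2 p.1 : Fin (k+1) → Eu d) := by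
  refine continuous_pi fun j => ?_
  refine Fin.lastCases ?_ ?_ j
  · simpa [Fin.snoc_last] using continuous_fst
  · intro j'
    simpa [Fin.snoc_castSucc, Function.comp_def] using (continuous_apply j').comp continuous_snd

lemma measurableSet_W : MeasurableSet (unitBallW d) := by
  unfold unitBallW; exact measurableSet_closedBall

lemma measurableSet_Wn (n : ℕ) : MeasurableSet (unitBallWn d n) :=
  MeasurableSet.univ_pi fun _ => measurableSet_closedBall

lemma isCompact_Wn (n : ℕ) : IsCompact (unitBallWn d n) :=
  isCompact_univ_pi fun _ => isCompact_closedBall _ _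

lemma integrableOn_Wn {n : ℕ} {F : (Fin n → Eu d) → ℝ} (hF : Continuous F) :
    IntegrableOn F (unitBallWn d n) :=
  hF.continuousOn.integrableOn_compact (isCompact_Wn n)

lemma cont_fderiv_term {n : ℕ} {f : (Fin n → Eu d) → ℝ} (hf : ContDiff ℝ 1 f)
    {V : Eu d → Eu d} (hV : ContDiff ℝ 1 V) (i : Fin n) :
    Continuous fun z : Fin n → Eu d => fderiv ℝ f z (Pi.single i (V (z i))) := by
  have h1 : Continuous fun z : Fin n → Eu d => (slot (d := d) i) (V (z i)) :=
    (slot i).continuous.comp (hV.continuous.comp (continuous_apply i))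
  have h2 := (hf.continuous_fderiv one_ne_zero).clm_apply h1
  simpa only [slot_apply] using h2

instance instFMCprod {k : ℕ} :
    IsFiniteMeasureOnCompacts (volume : Measure (Eu d × (Fin k → Eu d))) :=
  MeasureTheory.Measure.prod.instIsFiniteMeasureOnCompacts volume volume

lemma last_coord (hd : 1 ≤ d) {k : ℕ} (f : (Fin (k+1) → Eu d) → ℝ) (hf : ContDiff ℝ 1 f)
    (g : (Fin k → Eu d) → ℝ) (hg : Continuous g)
    (hcomp : ∀ (w : Fin k → Eu d) (v : Eu d), ‖v‖ = 1 → f (Fin.snoc w v) = g w)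
    (V : Eu d → Eu d) (hV : ContDiff ℝ 1 V) :
    ∫ z in unitBallWn d (k+1),
        (fderiv ℝ f z (Pi.single (Fin.last k) (V (z (Fin.last k))))
          + f z * divergence V (z (Fin.last k)))
      = (∫ u in unitBallW d, divergence V u) * ∫ w in unitBallWn d k, g w := by
  classical
  set T : (Fin (k+1) → Eu d) → ℝ := fun z =>
    fderiv ℝ f z (Pi.single (Fin.last k) (V (z (Fin.last k))))
      + f z * divergence V (z (Fin.last k)) with hT
  have hTcont : Continuous T := by
    refine Continuous.add (cont_fderiv_term hf hV (Fin.last k)) ?_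
    exact hf.continuous.mul ((continuous_divergence hV).comp (continuous_apply (Fin.last k)))
  set e := MeasurableEquiv.piFinSuccAbove (fun _ : Fin (k+1) => Eu d) (Fin.last k) with he
  have hsymm : ∀ p : Eu d × (Fin k → Eu d), (e.symm p : Fin (k+1) → Eu d) = Fin.snoc p.2 p.1 := by
    rintro ⟨v, w⟩
    have hrfl : (e.symm (v, w) : Fin (k+1) → Eu d)
        = Fin.insertNth (α := fun _ => Eu d) (Fin.last k) v w := rfl
    rw [hrfl]
    funext j
    refine Fin.lastCases ?_ ?_ j
    · simp [Fin.insertNth_apply_same, Fin.snoc_last]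
    · intro j'
      have h1 : (Fin.last k).succAbove j' = Fin.castSucc j' := Fin.succAbove_last_apply j'
      rw [← h1, Fin.insertNth_apply_succAbove, h1, Fin.snoc_castSucc]
  have hpre : ⇑e.symm ⁻¹' (unitBallWn d (k+1)) = unitBallW d ×ˢ unitBallWn d k := by
    ext ⟨v, w⟩
    simp only [Set.mem_preimage, Set.mem_prod, unitBallWn, Set.mem_pi, Set.mem_univ,
      forall_true_left, true_implies]
    rw [show (e.symm (v, w) : Fin (k+1) → Eu d) = Fin.snoc w v from hsymm (v, w)]
    constructor
    · intro h
      refine ⟨?_, fun j => ?_⟩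
      · have := h (Fin.last k); rwa [Fin.snoc_last] at this
      · have := h (Fin.castSucc j); rwa [Fin.snoc_castSucc] at this
    · rintro ⟨h1, h2⟩ j
      refine Fin.lastCases ?_ ?_ j
      · rwa [Fin.snoc_last]
      · intro j'; rw [Fin.snoc_castSucc]; exact h2 j'
  have step1 : ∫ z in unitBallWn d (k+1), T z
      = ∫ p in unitBallW d ×ˢ unitBallWn d k, T (Fin.snoc p.2 p.1) := by
    rw [← ((volume_preserving_piFinSuccAbove (fun _ : Fin (k+1) => Eu d)
        (Fin.last k)).symm).setIntegral_preimage_emb e.symm.measurableEmbedding T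
        (unitBallWn d (k+1)), hpre]
    exact setIntegral_congr_fun ((measurableSet_closedBall).prod (measurableSet_Wn k))
      fun p _ => by rw [hsymm]
  have hIntProd : IntegrableOn (fun p : Eu d × (Fin k → Eu d) => T (Fin.snoc p.2 p.1))
      (unitBallW d ×ˢ unitBallWn d k) := by
    refine ((hTcont.comp continuous_snoc).continuousOn).integrableOn_compact ?_
    exact (isCompact_closedBall _ _).prod (isCompact_Wn k)
  have step2 : ∫ p in unitBallW d ×ˢ unitBallWn d k, T (Fin.snoc p.2 p.1)
      = ∫ v in unitBallW d, ∫ w in unitBallWn d k, T (Fin.snoc w v) := by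
    rw [Measure.volume_eq_prod]
    refine setIntegral_prod _ ?_
    rw [← Measure.volume_eq_prod]
    exact hIntProd
  have step3 : ∫ v in unitBallW d, ∫ w in unitBallWn d k, T (Fin.snoc w v)
      = ∫ w in unitBallWn d k, ∫ v in unitBallW d, T (Fin.snoc w v) := by
    refine integral_integral_swap ?_
    rw [Measure.prod_restrict, ← Measure.volume_eq_prod]
    exact hIntProd
  -- inner integral via the divergence theorem on the ball
  have hinner : ∀ w : Fin k → Eu d,
      ∫ v in unitBallW d, T (Fin.snoc w v)
        = g w * ∫ u in unitBallW d, divergence V u := by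
    intro w
    set gw : Eu d → ℝ := fun v => f (Fin.snoc w v) with hgw
    have heq : (fun v : Eu d => (Fin.snoc w v : Fin (k+1) → Eu d))
        = fun v => Fin.snoc w 0 + slot (Fin.last k) v := funext fun v => snoc_eq_add w v
    have hsnocC1 : ContDiff ℝ 1 (fun v : Eu d => (Fin.snoc w v : Fin (k+1) → Eu d)) := by
      rw [heq]
      exact contDiff_const.add (slot (Fin.last k)).contDiff
    have hgwC1 : ContDiff ℝ 1 gw := hf.comp hsnocC1
    have hgwfd : ∀ v : Eu d, fderiv ℝ gw v
        = (fderiv ℝ f (Fin.snoc w v)).comp (slot (Fin.last k)) := by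
      intro v
      have hcurve : HasFDerivAt (fun v : Eu d => (Fin.snoc w v : Fin (k+1) → Eu d))
          (slot (Fin.last k)) v := by
        rw [heq]
        simpa using ((slot (d := d) (Fin.last k)).hasFDerivAt (x := v)).const_add (Fin.snoc w 0)
      exact ((hf.differentiable one_ne_zero _).hasFDerivAt.comp v hcurve).fderiv
    have hTsnoc : ∀ v : Eu d, T (Fin.snoc w v)
        = fderiv ℝ gw v (V v) + gw v * divergence V v := by
      intro v
      rw [hgwfd v]
      simp only [hT, ContinuousLinearMap.coe_comp', Function.comp_apply, Fin.snoc_last, hgw,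
        slot_apply]
    rw [setIntegral_congr_fun (s := unitBallW d) measurableSet_W fun v _ => hTsnoc v]
    exact ball_div_thm' hd gw hgwC1 (g w) (fun v hv => by rw [hgw]; exact hcomp w v hv) V hV
  rw [step1, step2, step3, setIntegral_congr_fun (measurableSet_Wn k) fun w _ => hinner w,
    integral_mul_const, mul_comm]

end LastCoord

section Perm
variable {d : ℕ}

lemma perm_setIntegral {n : ℕ} (σ : Equiv.Perm (Fin n)) (F : (Fin n → Eu d) → ℝ) :
    ∫ z in unitBallWn d n, F (z ∘ σ) = ∫ z in unitBallWn d n, F z := by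
  classical
  set e := MeasurableEquiv.piCongrLeft (fun _ : Fin n => Eu d) σ.symm with he
  have hcoe : ∀ (z : Fin n → Eu d) (b : Fin n), (e z) b = z (σ b) := by
    intro z b
    have h1 := Equiv.piCongrLeft_apply_apply (fun _ : Fin n => Eu d) σ.symm z (σ b)
    have h2 : σ.symm (σ b) = b := Equiv.symm_apply_apply σ b
    rw [h2] at h1
    exact h1
  have hfun : ∀ z : Fin n → Eu d, (e z : Fin n → Eu d) = z ∘ σ :=
    fun z => funext fun b => hcoe z b
  have hpre : ⇑e ⁻¹' (unitBallWn d n) = unitBallWn d n := by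
    ext z
    simp only [Set.mem_preimage, unitBallWn, Set.mem_pi, Set.mem_univ, true_implies]
    constructor
    · intro h j
      have := h (σ.symm j)
      rw [hcoe] at this
      rwa [Equiv.apply_symm_apply] at this
    · intro h b
      rw [hcoe]
      exact h _
  have key := (volume_measurePreserving_piCongrLeft (fun _ : Fin n => Eu d)
    σ.symm).setIntegral_preimage_emb e.measurableEmbedding F (unitBallWn d n)
  rw [hpre] at key
  rw [← key]
  exact setIntegral_congr_fun (measurableSet_Wn n) fun z _ => by rw [hfun]

lemma fderiv_perm {n : ℕ} {f : (Fin n → Eu d) → ℝ} (hf : ContDiff ℝ 1 f)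
    (σ : Equiv.Perm (Fin n)) (hsymf : ∀ z : Fin n → Eu d, f (z ∘ σ) = f z)
    (z w : Fin n → Eu d) :
    fderiv ℝ f z w = fderiv ℝ f (z ∘ σ) (w ∘ σ) := by
  set P : (Fin n → Eu d) →L[ℝ] (Fin n → Eu d) :=
    ContinuousLinearMap.pi (fun j => ContinuousLinearMap.proj (σ j)) with hPdef
  have hPa : ∀ z : Fin n → Eu d, P z = z ∘ σ := fun z => funext fun j => rfl
  have hfP : (fun z => f (P z)) = f := funext fun z => by rw [hPa]; exact hsymf z
  have hd1 : HasFDerivAt (fun z => f (P z)) ((fderiv ℝ f (P z)).comp P) z :=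
    (hf.differentiable one_ne_zero (P z)).hasFDerivAt.comp z P.hasFDerivAt
  rw [hfP] at hd1
  rw [hd1.fderiv]
  simp only [ContinuousLinearMap.coe_comp', Function.comp_apply]
  rw [hPa, hPa]

lemma single_comp_perm {n : ℕ} (σ : Equiv.Perm (Fin n)) (i : Fin n) (v : Eu d) :
    (Pi.single i v : Fin n → Eu d) ∘ σ = Pi.single (σ.symm i) v := by
  classical
  funext a
  simp only [Function.comp_apply, Pi.single_apply]
  by_cases h : σ a = i
  · rw [if_pos h, if_pos (by rw [← h, Equiv.symm_apply_apply])]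
  · rw [if_neg h, if_neg (fun hc => h (by rw [hc, Equiv.apply_symm_apply]))]

lemma Ti_reduce {k : ℕ} (f : (Fin (k+1) → Eu d) → ℝ) (hf : ContDiff ℝ 1 f)
    (hsymf : ∀ (σ : Equiv.Perm (Fin (k+1))) (z : Fin (k+1) → Eu d), f (z ∘ σ) = f z)
    (V : Eu d → Eu d) (i : Fin (k+1)) :
    ∫ z in unitBallWn d (k+1),
        (fderiv ℝ f z (Pi.single i (V (z i))) + f z * divergence V (z i))
      = ∫ z in unitBallWn d (k+1),
        (fderiv ℝ f z (Pi.single (Fin.last k) (V (z (Fin.last k))))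
          + f z * divergence V (z (Fin.last k))) := by
  classical
  set σ := Equiv.swap i (Fin.last k) with hσ
  have hσs : σ.symm = σ := Equiv.symm_swap i (Fin.last k)
  set Ti : (Fin (k+1) → Eu d) → ℝ := fun z =>
    fderiv ℝ f z (Pi.single i (V (z i))) + f z * divergence V (z i) with hTi
  have hpt : ∀ z : Fin (k+1) → Eu d,
      Ti (z ∘ σ) = fderiv ℝ f z (Pi.single (Fin.last k) (V (z (Fin.last k))))
        + f z * divergence V (z (Fin.last k)) := by
    intro z
    have h1 : (z ∘ σ) i = z (Fin.last k) := by
      simp only [Function.comp_apply, hσ, Equiv.swap_apply_left]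
    have h2 : f (z ∘ σ) = f z := hsymf σ z
    have h3 : fderiv ℝ f (z ∘ σ) (Pi.single i (V (z (Fin.last k))))
        = fderiv ℝ f z (Pi.single (Fin.last k) (V (z (Fin.last k)))) := by
      rw [fderiv_perm hf σ (hsymf σ) z (Pi.single (Fin.last k) (V (z (Fin.last k)))),
        single_comp_perm, hσs]
      simp only [hσ, Equiv.swap_apply_right]
    rw [hTi]
    simp only [h1, h2]
    rw [h3]
  rw [← perm_setIntegral σ Ti]
  exact setIntegral_congr_fun (measurableSet_Wn (k+1)) fun z _ => hpt z

end Perm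

section MainId
variable {d : ℕ}

lemma main_identity (hd : 1 ≤ d) {k : ℕ} (f : (Fin (k+1) → Eu d) → ℝ) (hf : ContDiff ℝ 1 f)
    (hsymf : ∀ (σ : Equiv.Perm (Fin (k+1))) (z : Fin (k+1) → Eu d), f (z ∘ σ) = f z)
    (g : (Fin k → Eu d) → ℝ) (hgc : Continuous g)
    (hcomp : ∀ (w : Fin k → Eu d) (v : Eu d), ‖v‖ = 1 → f (Fin.snoc w v) = g w)
    (V : Eu d → Eu d) (hV : ContDiff ℝ 1 V) :
    (∫ z in unitBallWn d (k+1), ∑ i, fderiv ℝ f z (Pi.single i (V (z i))))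
      + (∫ z in unitBallWn d (k+1), f z * ∑ i, divergence V (z i))
      = (k+1) * ((∫ u in unitBallW d, divergence V u) * ∫ w in unitBallWn d k, g w) := by
  classical
  have hTicont : ∀ i : Fin (k+1), Continuous fun z : Fin (k+1) → Eu d =>
      fderiv ℝ f z (Pi.single i (V (z i))) + f z * divergence V (z i) := fun i =>
    (cont_fderiv_term hf hV i).add
      (hf.continuous.mul ((continuous_divergence hV).comp (continuous_apply i)))
  have h1 : IntegrableOn (fun z : Fin (k+1) → Eu d =>
      ∑ i, fderiv ℝ f z (Pi.single i (V (z i)))) (unitBallWn d (k+1)) :=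
    integrableOn_Wn (continuous_finset_sum _ fun i _ => cont_fderiv_term hf hV i)
  have h2 : IntegrableOn (fun z : Fin (k+1) → Eu d =>
      f z * ∑ i, divergence V (z i)) (unitBallWn d (k+1)) :=
    integrableOn_Wn (hf.continuous.mul (continuous_finset_sum _ fun i _ =>
      (continuous_divergence hV).comp (continuous_apply i)))
  rw [← integral_add h1 h2]
  have hpt : ∀ z : Fin (k+1) → Eu d,
      (∑ i, fderiv ℝ f z (Pi.single i (V (z i)))) + f z * ∑ i, divergence V (z i)
        = ∑ i, (fderiv ℝ f z (Pi.single i (V (z i))) + f z * divergence V (z i)) := by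
    intro z
    rw [Finset.sum_add_distrib, Finset.mul_sum]
  rw [setIntegral_congr_fun (measurableSet_Wn (k+1)) fun z _ => hpt z,
    integral_finset_sum _ fun i _ => integrableOn_Wn (hTicont i)]
  have hred : ∀ i : Fin (k+1),
      ∫ z in unitBallWn d (k+1),
        (fderiv ℝ f z (Pi.single i (V (z i))) + f z * divergence V (z i))
      = (∫ u in unitBallW d, divergence V u) * ∫ w in unitBallWn d k, g w := by
    intro i
    rw [Ti_reduce f hf hsymf V i]
    exact last_coord hd f hf g hgc hcomp V hV
  rw [Finset.sum_congr rfl fun i _ => hred i, Finset.sum_const, Finset.card_univ,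
    Fintype.card_fin, nsmul_eq_mul]
  push_cast
  ring

lemma volume_Wn_toReal (n : ℕ) :
    (volume (unitBallWn d n)).toReal = (volume (unitBallW d)).toReal ^ n := by
  rw [unitBallWn, volume_pi_pi, Finset.prod_const, Finset.card_univ, Fintype.card_fin,
    ENNReal.toReal_pow]

lemma volume_Wn_lt_top (n : ℕ) : volume (unitBallWn d n) < ⊤ := by
  rw [unitBallWn, volume_pi_pi, Finset.prod_const, Finset.card_univ, Fintype.card_fin]
  exact ENNReal.pow_lt_top (by rw [unitBallW]; exact measure_closedBall_lt_top)

lemma abs_setIntegral_Wn_le {n : ℕ} {F : (Fin n → Eu d) → ℝ} (hF : Continuous F)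
    {M : ℝ} (hb : ∀ z ∈ unitBallWn d n, |F z| ≤ M) :
    |∫ z in unitBallWn d n, F z| ≤ M * (volume (unitBallW d)).toReal ^ n := by
  have := norm_setIntegral_le_of_norm_le_const (C := M) (volume_Wn_lt_top (d := d) n)
    (fun z hz => by rw [Real.norm_eq_abs]; exact hb z hz)
  rwa [Real.norm_eq_abs, measureReal_def, volume_Wn_toReal] at this

end MainId

lemma summable_n_pow_div_factorial (x : ℝ) (hx : 0 ≤ x) :
    Summable (fun n : ℕ => (n : ℝ) * x ^ n / n.factorial) := by
  refine Summable.of_nonneg_of_le (fun n => by positivity) (fun n => ?_)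
    (Real.summable_pow_div_factorial (2 * x))
  have h1 : (n : ℝ) * x ^ n ≤ (2 * x) ^ n := by
    rw [mul_pow]
    exact mul_le_mul_of_nonneg_right (by exact_mod_cast (Nat.lt_two_pow_self (n := n)).le) (by positivity)
  gcongr

/-- Integration by parts (duality) formula `E[∫_W D_x F · V(x) dx] = E[F δ(V)]` expressed through
the form functions of a Poisson functional. -/
theorem stmt0 (d : ℕ) (hd : 1 ≤ d) (θ : ℝ) (hθ : 0 < θ)
    (f : (n : ℕ) → (Fin n → EuclideanSpace ℝ (Fin d)) → ℝ)
    (hsmooth : ∀ n, ContDiff ℝ 1 (f n))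
    (hsym : ∀ (n : ℕ) (σ : Equiv.Perm (Fin n)) (z : Fin n → EuclideanSpace ℝ (Fin d)),
      f n (z ∘ σ) = f n z)
    (hcompat : ∀ (n : ℕ) (z : Fin n → EuclideanSpace ℝ (Fin d))
      (v : EuclideanSpace ℝ (Fin d)), ‖v‖ = 1 → f (n + 1) (Fin.snoc z v) = f n z)
    (C : ℝ) (hC : 1 < C)
    (hbound : ∀ (n : ℕ) (z : Fin n → EuclideanSpace ℝ (Fin d)), z ∈ unitBallWn d n →
      |f n z| + ∑ i : Fin n, ‖(fderiv ℝ (f n) z).comp (slot i)‖ ≤ C ^ n)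
    (V : EuclideanSpace ℝ (Fin d) → EuclideanSpace ℝ (Fin d)) (hV : ContDiff ℝ 1 V) :
    Summable (fun n : ℕ => θ ^ n / n.factorial *
      ∫ z in unitBallWn d n, ∑ i : Fin n, fderiv ℝ (f n) z (Pi.single i (V (z i))))
    ∧ Summable (fun n : ℕ => θ ^ n / n.factorial *
      ∫ z in unitBallWn d n, f n z *
        ((∑ i : Fin n, divergence V (z i)) - θ * ∫ u in unitBallW d, divergence V u))
    ∧ -(∑' n : ℕ, θ ^ n / n.factorial *
        ∫ z in unitBallWn d n, ∑ i : Fin n, fderiv ℝ (f n) z (Pi.single i (V (z i))))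
      = ∑' n : ℕ, θ ^ n / n.factorial *
        ∫ z in unitBallWn d n, f n z *
          ((∑ i : Fin n, divergence V (z i)) - θ * ∫ u in unitBallW d, divergence V u) := by
  classical
  have hCpos : (0:ℝ) < C := lt_trans one_pos hC
  -- bounds for V and its divergence on the ball
  obtain ⟨M, hM⟩ := (isCompact_closedBall (0 : Eu d) 1).exists_bound_of_continuousOn
    hV.continuous.continuousOn
  obtain ⟨K, hK⟩ := (isCompact_closedBall (0 : Eu d) 1).exists_bound_of_continuousOn
    (continuous_divergence hV).continuousOn
  set M0 : ℝ := max M 0 with hM0def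
  set K0 : ℝ := max K 0 with hK0def
  have hM0nn : 0 ≤ M0 := le_max_right _ _
  have hK0nn : 0 ≤ K0 := le_max_right _ _
  have hM0 : ∀ v ∈ unitBallW d, ‖V v‖ ≤ M0 := fun v hv =>
    le_trans (hM v hv) (le_max_left _ _)
  have hK0 : ∀ v ∈ unitBallW d, |divergence V v| ≤ K0 := fun v hv =>
    le_trans (le_of_eq (Real.norm_eq_abs _).symm) (le_trans (hK v hv) (le_max_left _ _))
  set κ : ℝ := (volume (unitBallW d)).toReal with hκdef
  have hκnn : 0 ≤ κ := ENNReal.toReal_nonneg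
  set D : ℝ := ∫ u in unitBallW d, divergence V u with hDdef
  have hWfin : volume (unitBallW d) < ⊤ := by
    rw [unitBallW]; exact measure_closedBall_lt_top
  have hDabs : |D| ≤ K0 * κ := by
    have := norm_setIntegral_le_of_norm_le_const hWfin
      (fun v hv => le_trans (le_of_eq (Real.norm_eq_abs _)) (hK0 v hv))
    rwa [Real.norm_eq_abs, measureReal_def] at this
  -- basic bounds from hbound
  have habsf : ∀ (n : ℕ) (z : Fin n → Eu d), z ∈ unitBallWn d n → |f n z| ≤ C ^ n :=
    fun n z hz => le_trans (le_add_of_nonneg_right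
      (Finset.sum_nonneg fun i _ => norm_nonneg _)) (hbound n z hz)
  have hsumnorm : ∀ (n : ℕ) (z : Fin n → Eu d), z ∈ unitBallWn d n →
      ∑ i : Fin n, ‖(fderiv ℝ (f n) z).comp (slot i)‖ ≤ C ^ n :=
    fun n z hz => le_trans (le_add_of_nonneg_left (abs_nonneg _)) (hbound n z hz)
  -- the three sequences
  set A : ℕ → ℝ := fun n =>
    ∫ z in unitBallWn d n, ∑ i : Fin n, fderiv ℝ (f n) z (Pi.single i (V (z i))) with hA
  set Bs : ℕ → ℝ := fun n =>
    ∫ z in unitBallWn d n, f n z * ∑ i : Fin n, divergence V (z i) with hBs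
  set Fs : ℕ → ℝ := fun n => ∫ z in unitBallWn d n, f n z with hFs
  have hcontf : ∀ n, Continuous (f n) := fun n => (hsmooth n).continuous
  have hcont1 : ∀ n, Continuous fun z : Fin n → Eu d =>
      ∑ i : Fin n, fderiv ℝ (f n) z (Pi.single i (V (z i))) :=
    fun n => continuous_finset_sum _ fun i _ => cont_fderiv_term (hsmooth n) hV i
  have hcontdivsum : ∀ n, Continuous fun z : Fin n → Eu d =>
      ∑ i : Fin n, divergence V (z i) :=
    fun n => continuous_finset_sum _ fun i _ =>
      (continuous_divergence hV).comp (continuous_apply i)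
  have hcont2 : ∀ n, Continuous fun z : Fin n → Eu d =>
      f n z * ∑ i : Fin n, divergence V (z i) :=
    fun n => (hcontf n).mul (hcontdivsum n)
  have hmemW : ∀ (n : ℕ) (z : Fin n → Eu d), z ∈ unitBallWn d n → ∀ i, z i ∈ unitBallW d :=
    fun n z hz i => hz i (Set.mem_univ i)
  -- bounds on the sequences
  have hAb : ∀ n, |A n| ≤ M0 * C ^ n * κ ^ n := by
    intro n
    have hb : ∀ z ∈ unitBallWn d n,
        |∑ i : Fin n, fderiv ℝ (f n) z (Pi.single i (V (z i)))| ≤ M0 * C ^ n := by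
      intro z hz
      refine le_trans (Finset.abs_sum_le_sum_abs _ _) ?_
      have hterm : ∀ i : Fin n, |fderiv ℝ (f n) z (Pi.single i (V (z i)))|
          ≤ ‖(fderiv ℝ (f n) z).comp (slot i)‖ * M0 := by
        intro i
        have he : fderiv ℝ (f n) z (Pi.single i (V (z i)))
            = ((fderiv ℝ (f n) z).comp (slot i)) (V (z i)) := by
          rw [ContinuousLinearMap.comp_apply, slot_apply]
        rw [he, ← Real.norm_eq_abs]
        exact le_trans (ContinuousLinearMap.le_opNorm _ _)
          (mul_le_mul_of_nonneg_left (hM0 _ (hmemW n z hz i)) (norm_nonneg _))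
      refine le_trans (Finset.sum_le_sum fun i _ => hterm i) ?_
      rw [← Finset.sum_mul]
      calc (∑ i : Fin n, ‖(fderiv ℝ (f n) z).comp (slot i)‖) * M0
          ≤ C ^ n * M0 := mul_le_mul_of_nonneg_right (hsumnorm n z hz) hM0nn
        _ = M0 * C ^ n := mul_comm _ _
    exact abs_setIntegral_Wn_le (hcont1 n) hb
  have hBb : ∀ n, |Bs n| ≤ (n : ℝ) * K0 * C ^ n * κ ^ n := by
    intro n
    have hb : ∀ z ∈ unitBallWn d n,
        |f n z * ∑ i : Fin n, divergence V (z i)| ≤ (n : ℝ) * K0 * C ^ n := by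
      intro z hz
      rw [abs_mul]
      have h1 : |∑ i : Fin n, divergence V (z i)| ≤ (n : ℝ) * K0 := by
        refine le_trans (Finset.abs_sum_le_sum_abs _ _) ?_
        calc ∑ i : Fin n, |divergence V (z i)|
            ≤ ∑ _i : Fin n, K0 := Finset.sum_le_sum fun i _ => hK0 _ (hmemW n z hz i)
          _ = (n : ℝ) * K0 := by
              rw [Finset.sum_const, Finset.card_univ, Fintype.card_fin, nsmul_eq_mul]
      calc |f n z| * |∑ i : Fin n, divergence V (z i)|
          ≤ C ^ n * ((n : ℝ) * K0) :=
            mul_le_mul (habsf n z hz) h1 (abs_nonneg _) (by positivity)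
        _ = (n : ℝ) * K0 * C ^ n := by ring
    exact abs_setIntegral_Wn_le (hcont2 n) hb
  have hFb : ∀ n, |Fs n| ≤ C ^ n * κ ^ n := by
    intro n
    exact abs_setIntegral_Wn_le (hcontf n) (fun z hz => habsf n z hz)
  -- summability of the three series
  have hnonneg : ∀ n : ℕ, (0:ℝ) ≤ θ ^ n / n.factorial := fun n => by positivity
  have hsum_a : Summable fun n => θ ^ n / n.factorial * A n := by
    refine Summable.of_norm_bounded (g := fun n => M0 * ((θ * C * κ) ^ n / n.factorial))
      ((Real.summable_pow_div_factorial (θ * C * κ)).mul_left M0) fun n => ?_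
    rw [Real.norm_eq_abs, abs_mul, abs_of_nonneg (hnonneg n)]
    calc θ ^ n / n.factorial * |A n|
        ≤ θ ^ n / n.factorial * (M0 * C ^ n * κ ^ n) :=
          mul_le_mul_of_nonneg_left (hAb n) (hnonneg n)
      _ = M0 * ((θ * C * κ) ^ n / n.factorial) := by
          rw [mul_pow, mul_pow]; ring
  have hsum_b1 : Summable fun n => θ ^ n / n.factorial * Bs n := by
    refine Summable.of_norm_bounded
      (g := fun n => K0 * ((n : ℝ) * (θ * C * κ) ^ n / n.factorial))
      ((summable_n_pow_div_factorial (θ * C * κ) (by positivity)).mul_left K0) fun n => ?_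
    rw [Real.norm_eq_abs, abs_mul, abs_of_nonneg (hnonneg n)]
    calc θ ^ n / n.factorial * |Bs n|
        ≤ θ ^ n / n.factorial * ((n : ℝ) * K0 * C ^ n * κ ^ n) :=
          mul_le_mul_of_nonneg_left (hBb n) (hnonneg n)
      _ = K0 * ((n : ℝ) * (θ * C * κ) ^ n / n.factorial) := by
          rw [mul_pow, mul_pow]; ring
  have hsum_f : Summable fun n => θ ^ n / n.factorial * Fs n := by
    refine Summable.of_norm_bounded (g := fun n => (θ * C * κ) ^ n / n.factorial)
      (Real.summable_pow_div_factorial (θ * C * κ)) fun n => ?_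
    rw [Real.norm_eq_abs, abs_mul, abs_of_nonneg (hnonneg n)]
    calc θ ^ n / n.factorial * |Fs n|
        ≤ θ ^ n / n.factorial * (C ^ n * κ ^ n) :=
          mul_le_mul_of_nonneg_left (hFb n) (hnonneg n)
      _ = (θ * C * κ) ^ n / n.factorial := by rw [mul_pow, mul_pow]; ring
  -- identity (1) : the second integrand splits
  have hid1 : ∀ n : ℕ,
      (∫ z in unitBallWn d n, f n z * ((∑ i : Fin n, divergence V (z i)) - θ * D))
        = Bs n - θ * D * Fs n := by
    intro n
    have hsplit : ∀ z : Fin n → Eu d,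
        f n z * ((∑ i : Fin n, divergence V (z i)) - θ * D)
          = f n z * ∑ i : Fin n, divergence V (z i) - f n z * (θ * D) := fun z => by ring
    rw [setIntegral_congr_fun (measurableSet_Wn n) fun z _ => hsplit z,
      integral_sub (integrableOn_Wn (hcont2 n))
        (integrableOn_Wn (F := fun z => f n z * (θ * D)) ((hcontf n).mul continuous_const)),
      integral_mul_const]
    rw [hBs, hFs]
    ring
  -- identity (3) : integration by parts in the last coordinate
  have hid3 : ∀ k : ℕ, A (k+1) + Bs (k+1) = ((k:ℝ) + 1) * (D * Fs k) := by
    intro k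
    have := main_identity hd (f (k+1)) (hsmooth (k+1)) (fun σ z => hsym (k+1) σ z)
      (f k) (hcontf k) (fun w v hv => hcompat k w v hv) V hV
    rw [hA, hBs, hFs, hDdef]
    push_cast at this ⊢
    linarith [this]
  have hA0 : A 0 = 0 := by
    rw [hA]
    simp
  have hB0 : Bs 0 = 0 := by
    rw [hBs]
    simp
  -- assemble
  refine ⟨hsum_a, ?_, ?_⟩
  · have heqfun : (fun n : ℕ => θ ^ n / n.factorial *
        ∫ z in unitBallWn d n, f n z *
          ((∑ i : Fin n, divergence V (z i)) - θ * ∫ u in unitBallW d, divergence V u))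
        = fun n => θ ^ n / n.factorial * Bs n - θ * D * (θ ^ n / n.factorial * Fs n) := by
      funext n
      rw [← hDdef, hid1 n]
      ring
    rw [heqfun]
    exact hsum_b1.sub (hsum_f.mul_left (θ * D))
  · -- the main equality
    set u : ℕ → ℝ := fun n => θ ^ n / n.factorial * (A n + Bs n) with hu
    have hu_eq : u = fun n => θ ^ n / n.factorial * A n + θ ^ n / n.factorial * Bs n := by
      funext n; simp only [hu]; ring
    have hSu : Summable u := by rw [hu_eq]; exact hsum_a.add hsum_b1
    have hu0 : u 0 = 0 := by rw [hu]; simp [hA0, hB0]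
    have huv : ∀ k : ℕ, u (k + 1) = θ * D * (θ ^ k / k.factorial * Fs k) := by
      intro k
      simp only [hu]
      rw [hid3 k]
      have hfact : ((k+1).factorial : ℝ) = ((k:ℝ) + 1) * k.factorial := by
        rw [Nat.factorial_succ]; push_cast; ring
      have hkf : (k.factorial : ℝ) ≠ 0 := by positivity
      have hkf1 : ((k:ℝ) + 1) ≠ 0 := by positivity
      rw [pow_succ, hfact]
      field_simp
    have htsum_u : ∑' n, u n = θ * D * ∑' n, (θ ^ n / n.factorial * Fs n) := by
      rw [Summable.tsum_eq_zero_add hSu, hu0, zero_add]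
      rw [tsum_congr huv]
      rw [tsum_mul_left]
    have htsum_u' : ∑' n, u n
        = (∑' n, θ ^ n / n.factorial * A n) + ∑' n, θ ^ n / n.factorial * Bs n := by
      rw [hu_eq]
      exact Summable.tsum_add hsum_a hsum_b1
    have heqfun : (fun n : ℕ => θ ^ n / n.factorial *
        ∫ z in unitBallWn d n, f n z *
          ((∑ i : Fin n, divergence V (z i)) - θ * ∫ u in unitBallW d, divergence V u))
        = fun n => θ ^ n / n.factorial * Bs n - θ * D * (θ ^ n / n.factorial * Fs n) := by
      funext n
      rw [← hDdef, hid1 n]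
      ring
    rw [heqfun]
    rw [Summable.tsum_sub hsum_b1 (hsum_f.mul_left (θ * D)), tsum_mul_left]
    have h1 := htsum_u.symm.trans htsum_u'
    linarith [h1]
end
end

section
/- Let n ≥ 1 be an integer, M > 0, and let g : ℝⁿ → ℂ be a Schwartz function with Fourier representation g(x') = ∫_{ℝⁿ} ĝ(ξ') e^{i x'·ξ'} dξ'. Set Λ_{M+1/2} = ( ∫_ℝ (1 + t²)^{−(M+1/2)} dt )^{1/2} and define f : ℝ^{n+1} → ℂ by f(x', x_{n+1}) = ∫_{ℝ^{n+1}} F(ξ', ξ_{n+1}) e^{i (x'·ξ' + x_{n+1} ξ_{n+1})} dξ' dξ_{n+1}, where F(ξ', ξ_{n+1}) = Λ_{M+1/2}^{−2} (1 + ‖ξ'‖²)^M ĝ(ξ') (1 + ‖ξ'‖² + ξ_{n+1}²)^{−(M+1/2)}. Then f is well defined and its trace on the hyperplane {x_{n+1} = 0} equals g: f(x', 0) = g(x') for every x' ∈ ℝⁿ. Moreover, if g is symmetric under permutations of its n variables, so is f. -/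
open MeasureTheory
open Real
open scoped RealInnerProductSpace ContDiff

noncomputable section

/-- The Fourier-side extension kernel
`F(ξ', ξ_{n+1}) = Λ_{M+1/2}^{−2} (1+‖ξ'‖²)^M ĝ(ξ') (1+‖ξ'‖²+ξ_{n+1}²)^{−(M+1/2)}`. -/
def extKernel {n : ℕ} (M : ℝ) (ghat : EuclideanSpace ℝ (Fin n) → ℂ)
    (ζ : EuclideanSpace ℝ (Fin n) × ℝ) : ℂ :=
  (((Real.sqrt (∫ t : ℝ, (1 + t ^ 2) ^ (-(M + 1 / 2))) ^ 2)⁻¹ *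
      ((1 + ‖ζ.1‖ ^ 2) ^ M * (1 + ‖ζ.1‖ ^ 2 + ζ.2 ^ 2) ^ (-(M + 1 / 2))) : ℝ) : ℂ) *
    ghat ζ.1

/-- The extension `f(x', x_{n+1}) = ∫ F(ξ) e^{i(x'·ξ' + x_{n+1} ξ_{n+1})} dξ` of `g`. -/
def extFun {n : ℕ} (M : ℝ) (ghat : EuclideanSpace ℝ (Fin n) → ℂ)
    (x : EuclideanSpace ℝ (Fin n)) (t : ℝ) : ℂ :=
  ∫ ζ : EuclideanSpace ℝ (Fin n) × ℝ,
    extKernel M ghat ζ * Complex.exp (Complex.I * (((⟪x, ζ.1⟫ + t * ζ.2 : ℝ)) : ℂ))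

lemma integrable_aux {M : ℝ} (hM : 0 < M) :
    Integrable (fun t : ℝ => (1 + t ^ 2) ^ (-(M + 1/2))) := by
  have h := integrable_rpow_neg_one_add_norm_sq (E := ℝ) (μ := volume) (r := 2*M+1)
    (by simp [Module.finrank_self]; linarith)
  have : (fun t : ℝ => (1 + t ^ 2) ^ (-(M + 1/2)))
      = fun x : ℝ => ((1:ℝ) + ‖x‖ ^ 2) ^ (-(2*M+1)/2) := by
    funext t
    rw [Real.norm_eq_abs, sq_abs]
    congr 1
    ring
  rw [this]; exact h

lemma lam_pos {M : ℝ} (hM : 0 < M) :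
    0 < ∫ t : ℝ, (1 + t ^ 2) ^ (-(M + 1/2)) := by
  rw [integral_pos_iff_support_of_nonneg (fun t => by positivity) (integrable_aux hM)]
  have : (Function.support fun t : ℝ => (1 + t ^ 2) ^ (-(M + 1/2))) = Set.univ := by
    ext t; simp only [Function.mem_support, Set.mem_univ, iff_true]
    positivity
  rw [this]
  simp

lemma rescale_eq {M : ℝ} {c : ℝ} (hc : 0 < c) :
    (fun s : ℝ => (c + s ^ 2) ^ (-(M + 1/2)))
      = fun s : ℝ => c ^ (-(M + 1/2)) * (1 + ((Real.sqrt c)⁻¹ * s) ^ 2) ^ (-(M + 1/2)) := by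
  funext s
  have h1 : (0:ℝ) < 1 + ((Real.sqrt c)⁻¹ * s) ^ 2 := by positivity
  have key : c + s ^ 2 = c * (1 + ((Real.sqrt c)⁻¹ * s) ^ 2) := by
    have h2 : Real.sqrt c ≠ 0 := by positivity
    field_simp
    rw [Real.sq_sqrt hc.le]; ring
  rw [key, Real.mul_rpow hc.le h1.le]

lemma integrable_shift {M : ℝ} (hM : 0 < M) {c : ℝ} (hc : 0 < c) :
    Integrable (fun s : ℝ => (c + s ^ 2) ^ (-(M + 1/2))) := by
  rw [rescale_eq hc]
  exact (((integrable_aux hM).comp_mul_left'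
    (R := (Real.sqrt c)⁻¹) (by positivity)).const_mul _)

lemma integral_shift {M : ℝ} (hM : 0 < M) {c : ℝ} (hc : 0 < c) :
    ∫ s : ℝ, (c + s ^ 2) ^ (-(M + 1/2))
      = c ^ (-M) * ∫ t : ℝ, (1 + t ^ 2) ^ (-(M + 1/2)) := by
  rw [rescale_eq hc]
  rw [MeasureTheory.integral_const_mul]
  rw [MeasureTheory.Measure.integral_comp_mul_left
    (fun t : ℝ => (1 + t ^ 2) ^ (-(M + 1/2))) ((Real.sqrt c)⁻¹)]
  have hsc : (0:ℝ) < Real.sqrt c := Real.sqrt_pos.2 hc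
  rw [inv_inv, abs_of_pos hsc, smul_eq_mul, ← mul_assoc]
  congr 1
  rw [Real.sqrt_eq_rpow, ← Real.rpow_add hc]
  congr 1
  ring

lemma sq_sqrt_L {M : ℝ} (hM : 0 < M) :
    Real.sqrt (∫ t : ℝ, (1 + t ^ 2) ^ (-(M + 1/2))) ^ 2
      = ∫ t : ℝ, (1 + t ^ 2) ^ (-(M + 1/2)) :=
  Real.sq_sqrt (lam_pos hM).le

lemma norm_fact {M : ℝ} (hM : 0 < M) {c : ℝ} (hc : 0 < c) :
    ∫ s : ℝ, (Real.sqrt (∫ t : ℝ, (1 + t ^ 2) ^ (-(M + 1/2))) ^ 2)⁻¹ *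
      (c ^ M * (c + s ^ 2) ^ (-(M + 1/2))) = 1 := by
  rw [MeasureTheory.integral_const_mul, MeasureTheory.integral_const_mul,
    integral_shift hM hc, sq_sqrt_L hM]
  have h1 : c ^ M * (c ^ (-M) * ∫ t : ℝ, (1 + t ^ 2) ^ (-(M + 1/2)))
      = ∫ t : ℝ, (1 + t ^ 2) ^ (-(M + 1/2)) := by
    rw [← mul_assoc, ← Real.rpow_add hc]
    simp
  rw [h1, inv_mul_cancel₀ (lam_pos hM).ne']

lemma exp_norm_one (r : ℝ) : ‖Complex.exp (Complex.I * (r : ℂ))‖ = 1 := by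
  rw [mul_comm]
  exact Complex.norm_exp_ofReal_mul_I r

lemma slice_cont {n : ℕ} (M : ℝ) (ghat : EuclideanSpace ℝ (Fin n) → ℂ)
    (ξ : EuclideanSpace ℝ (Fin n)) (a t : ℝ) :
    Continuous (fun s : ℝ =>
      extKernel M ghat (ξ, s) * Complex.exp (Complex.I * ((a + t * s : ℝ) : ℂ))) := by
  unfold extKernel
  dsimp only
  apply Continuous.mul
  · apply Continuous.mul
    · apply Complex.continuous_ofReal.comp
      apply Continuous.mul continuous_const
      apply Continuous.mul continuous_const
      apply Continuous.rpow_const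
      · continuity
      · intro s; left; positivity
    · exact continuous_const
  · exact Complex.continuous_exp.comp (continuous_const.mul
      (Complex.continuous_ofReal.comp (by continuity)))

lemma extKernel_norm {n : ℕ} {M : ℝ} (hM : 0 < M) (ghat : EuclideanSpace ℝ (Fin n) → ℂ)
    (ζ : EuclideanSpace ℝ (Fin n) × ℝ) (r : ℝ) :
    ‖extKernel M ghat ζ * Complex.exp (Complex.I * (r : ℂ))‖
      = (Real.sqrt (∫ t : ℝ, (1 + t ^ 2) ^ (-(M + 1/2))) ^ 2)⁻¹ *
        ((1 + ‖ζ.1‖ ^ 2) ^ M * (1 + ‖ζ.1‖ ^ 2 + ζ.2 ^ 2) ^ (-(M + 1/2))) * ‖ghat ζ.1‖ := by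
  rw [norm_mul, exp_norm_one, mul_one, extKernel, norm_mul, Complex.norm_real,
    Real.norm_eq_abs, abs_of_nonneg]
  have h1 : (0:ℝ) < 1 + ‖ζ.1‖ ^ 2 := by positivity
  have h2 : (0:ℝ) < 1 + ‖ζ.1‖ ^ 2 + ζ.2 ^ 2 := by positivity
  have := lam_pos hM
  positivity

lemma slice_integrable {n : ℕ} {M : ℝ} (hM : 0 < M) (ghat : EuclideanSpace ℝ (Fin n) → ℂ)
    (ξ : EuclideanSpace ℝ (Fin n)) (a t : ℝ) :
    Integrable (fun s : ℝ =>
      extKernel M ghat (ξ, s) * Complex.exp (Complex.I * ((a + t * s : ℝ) : ℂ))) := by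
  have hc : (0:ℝ) < 1 + ‖ξ‖ ^ 2 := by positivity
  refine Integrable.mono' (g := fun s : ℝ =>
      ((Real.sqrt (∫ t : ℝ, (1 + t ^ 2) ^ (-(M + 1/2))) ^ 2)⁻¹ *
        (1 + ‖ξ‖ ^ 2) ^ M * ‖ghat ξ‖) * (1 + ‖ξ‖ ^ 2 + s ^ 2) ^ (-(M + 1/2)))
    (((integrable_shift hM hc).const_mul _)) ((slice_cont M ghat ξ a t).aestronglyMeasurable) ?_
  filter_upwards with s
  rw [extKernel_norm hM]
  apply le_of_eq
  ring

lemma slice_integral {n : ℕ} {M : ℝ} (hM : 0 < M) (ghat : EuclideanSpace ℝ (Fin n) → ℂ)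
    (ξ : EuclideanSpace ℝ (Fin n)) :
    ∫ s : ℝ, extKernel M ghat (ξ, s) = ghat ξ := by
  have hc : (0:ℝ) < 1 + ‖ξ‖ ^ 2 := by positivity
  unfold extKernel
  dsimp only
  rw [MeasureTheory.integral_mul_const]
  have h : (∫ a : ℝ, (((Real.sqrt (∫ t : ℝ, (1 + t ^ 2) ^ (-(M + 1 / 2))) ^ 2)⁻¹ *
        ((1 + ‖ξ‖ ^ 2) ^ M * (1 + ‖ξ‖ ^ 2 + a ^ 2) ^ (-(M + 1 / 2))) : ℝ) : ℂ))
      = (((∫ a : ℝ, (Real.sqrt (∫ t : ℝ, (1 + t ^ 2) ^ (-(M + 1 / 2))) ^ 2)⁻¹ *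
        ((1 + ‖ξ‖ ^ 2) ^ M * (1 + ‖ξ‖ ^ 2 + a ^ 2) ^ (-(M + 1 / 2))) : ℝ)) : ℂ) :=
    integral_ofReal (𝕜 := ℂ)
  rw [h, norm_fact hM hc]
  simp

lemma main_meas {n : ℕ} (M : ℝ) {ghat : EuclideanSpace ℝ (Fin n) → ℂ}
    (hghat : Integrable ghat) (x : EuclideanSpace ℝ (Fin n)) (t : ℝ) :
    AEStronglyMeasurable (fun ζ : EuclideanSpace ℝ (Fin n) × ℝ =>
      extKernel M ghat ζ * Complex.exp (Complex.I * (((⟪x, ζ.1⟫ + t * ζ.2 : ℝ)) : ℂ)))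
      (volume.prod volume) := by
  have h1 : AEStronglyMeasurable (fun ζ : EuclideanSpace ℝ (Fin n) × ℝ => ghat ζ.1)
      (volume.prod volume) := hghat.1.comp_fst
  have h2 : Continuous (fun ζ : EuclideanSpace ℝ (Fin n) × ℝ =>
      (((Real.sqrt (∫ t : ℝ, (1 + t ^ 2) ^ (-(M + 1 / 2))) ^ 2)⁻¹ *
      ((1 + ‖ζ.1‖ ^ 2) ^ M * (1 + ‖ζ.1‖ ^ 2 + ζ.2 ^ 2) ^ (-(M + 1 / 2))) : ℝ) : ℂ)) := by
    apply Complex.continuous_ofReal.comp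
    apply Continuous.mul continuous_const
    apply Continuous.mul
    · apply Continuous.rpow_const
      · continuity
      · intro ζ; left; positivity
    · apply Continuous.rpow_const
      · continuity
      · intro ζ; left; positivity
  have h3 : Continuous (fun ζ : EuclideanSpace ℝ (Fin n) × ℝ =>
      Complex.exp (Complex.I * (((⟪x, ζ.1⟫ + t * ζ.2 : ℝ)) : ℂ))) := by
    apply Complex.continuous_exp.comp
    apply Continuous.mul continuous_const
    apply Complex.continuous_ofReal.comp
    exact ((continuous_const.inner continuous_fst).add
      (continuous_const.mul continuous_snd))
  unfold extKernel
  exact ((h2.aestronglyMeasurable.mul h1).mul h3.aestronglyMeasurable)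

lemma main_integrable {n : ℕ} {M : ℝ} (hM : 0 < M) {ghat : EuclideanSpace ℝ (Fin n) → ℂ}
    (hghat : Integrable ghat) (x : EuclideanSpace ℝ (Fin n)) (t : ℝ) :
    Integrable (fun ζ : EuclideanSpace ℝ (Fin n) × ℝ =>
      extKernel M ghat ζ * Complex.exp (Complex.I * (((⟪x, ζ.1⟫ + t * ζ.2 : ℝ)) : ℂ))) := by
  rw [MeasureTheory.Measure.volume_eq_prod]
  rw [MeasureTheory.integrable_prod_iff (main_meas M hghat x t)]
  constructor
  · exact ae_of_all _ fun ξ => slice_integrable hM ghat ξ ⟪x, ξ⟫ t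
  · apply hghat.norm.congr
    apply ae_of_all
    intro ξ
    have hc : (0:ℝ) < 1 + ‖ξ‖ ^ 2 := by positivity
    have : ∀ s : ℝ, ‖extKernel M ghat (ξ, s) *
        Complex.exp (Complex.I * (((⟪x, ξ⟫ + t * s : ℝ)) : ℂ))‖
        = (Real.sqrt (∫ u : ℝ, (1 + u ^ 2) ^ (-(M + 1/2))) ^ 2)⁻¹ *
          ((1 + ‖ξ‖ ^ 2) ^ M * (1 + ‖ξ‖ ^ 2 + s ^ 2) ^ (-(M + 1/2))) * ‖ghat ξ‖ :=
      fun s => extKernel_norm hM ghat (ξ, s) _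
    simp only [this]
    rw [MeasureTheory.integral_mul_const, norm_fact hM hc, one_mul]

lemma trace_eq {n : ℕ} {M : ℝ} (hM : 0 < M) {ghat : EuclideanSpace ℝ (Fin n) → ℂ}
    (hghat : Integrable ghat) (x : EuclideanSpace ℝ (Fin n)) :
    (∫ ζ : EuclideanSpace ℝ (Fin n) × ℝ,
        extKernel M ghat ζ * Complex.exp (Complex.I * (((⟪x, ζ.1⟫ + 0 * ζ.2 : ℝ)) : ℂ)))
      = ∫ ξ : EuclideanSpace ℝ (Fin n),
          ghat ξ * Complex.exp (Complex.I * ((⟪x, ξ⟫ : ℝ) : ℂ)) := by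
  have hint := main_integrable hM hghat x 0
  rw [MeasureTheory.Measure.volume_eq_prod] at hint ⊢
  rw [MeasureTheory.integral_prod _ hint]
  congr 1
  funext ξ
  simp only [zero_mul, add_zero]
  rw [MeasureTheory.integral_mul_const, slice_integral hM ghat ξ]

def mkSchwartz {E : Type*} [NormedAddCommGroup E] [NormedSpace ℝ E]
    (φ : E → ℝ) (h1 : ContDiff ℝ ∞ φ) (h2 : HasCompactSupport φ) :
    SchwartzMap E ℂ where
  toFun := fun x => (φ x : ℂ)
  smooth' := Complex.ofRealCLM.contDiff.comp h1
  decay' := by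
    intro k m
    have hsm : ContDiff ℝ ∞ (fun x => (φ x : ℂ)) := Complex.ofRealCLM.contDiff.comp h1
    have hcs : HasCompactSupport (fun x => (φ x : ℂ)) :=
      h2.comp_left (g := Complex.ofReal) (by simp)
    have hD : HasCompactSupport (iteratedFDeriv ℝ m (fun x => (φ x : ℂ))) :=
      hcs.iteratedFDeriv m
    have hDc : Continuous (iteratedFDeriv ℝ m (fun x => (φ x : ℂ))) :=
      hsm.continuous_iteratedFDeriv (by exact_mod_cast le_top)
    have hfull : HasCompactSupport
        (fun x => ‖x‖ ^ k * ‖iteratedFDeriv ℝ m (fun y => (φ y : ℂ)) x‖) :=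
      (hD.norm).mul_left
    obtain ⟨C, hC⟩ := ((continuous_norm.pow k).mul hDc.norm).bounded_above_of_compact_support hfull
    refine ⟨C, fun x => ?_⟩
    have := hC x
    have hnn : (0:ℝ) ≤ ‖x‖ ^ k * ‖iteratedFDeriv ℝ m (fun y => (φ y : ℂ)) x‖ := by positivity
    rw [Real.norm_eq_abs] at this; exact (le_abs_self _).trans this

lemma fourier_inj {n : ℕ} {h : EuclideanSpace ℝ (Fin n) → ℂ} (hint : Integrable h)
    (hzero : ∀ x : EuclideanSpace ℝ (Fin n),
      ∫ ξ, h ξ * Complex.exp (Complex.I * ((⟪x, ξ⟫ : ℝ) : ℂ)) = 0) :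
    ∀ᵐ ξ : EuclideanSpace ℝ (Fin n), h ξ = 0 := by
  have hF : ∀ w, FourierTransform.fourier h w = 0 := by
    intro w
    rw [Real.fourier_eq']
    rw [← hzero (((-2) * Real.pi) • w)]
    congr 1
    funext v
    rw [smul_eq_mul, mul_comm]
    congr 1
    have : ⟪((-2) * Real.pi) • w, v⟫ = (-2) * Real.pi * ⟪w, v⟫ := real_inner_smul_left w v _
    rw [this, real_inner_comm w v]
    push_cast
    ring
  apply ae_eq_zero_of_integral_contDiff_smul_eq_zero hint.locallyIntegrable
  intro φ hφ hφc
  set Φ : SchwartzMap (EuclideanSpace ℝ (Fin n)) ℂ := mkSchwartz φ hφ hφc with hΦ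
  set Ψ : SchwartzMap (EuclideanSpace ℝ (Fin n)) ℂ :=
    (SchwartzMap.fourierTransformCLE ℂ (SchwartzMap (EuclideanSpace ℝ (Fin n)) ℂ)).symm Φ with hΨdef
  have hΨ : FourierTransform.fourier (Ψ : EuclideanSpace ℝ (Fin n) → ℂ) = Φ := by
    have := (SchwartzMap.fourierTransformCLE ℂ (SchwartzMap (EuclideanSpace ℝ (Fin n)) ℂ)).apply_symm_apply Φ
    rw [← this]; rfl
  have key := VectorFourier.integral_fourierIntegral_smul_eq_flip
    (e := Real.fourierChar) (L := innerₗ (EuclideanSpace ℝ (Fin n)))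
    (μ := volume) (ν := volume) Real.continuous_fourierChar continuous_inner
    Ψ.integrable hint
  have hflip : (innerₗ (EuclideanSpace ℝ (Fin n))).flip = innerₗ (EuclideanSpace ℝ (Fin n)) := by
    apply LinearMap.ext; intro a; apply LinearMap.ext; intro b
    exact real_inner_comm a b
  rw [hflip] at key
  have hzero' : VectorFourier.fourierIntegral Real.fourierChar volume
      (innerₗ (EuclideanSpace ℝ (Fin n))) h = 0 := by
    funext w; exact hF w
  rw [hzero'] at key
  simp only [Pi.zero_apply, smul_zero, integral_zero] at key
  have : ∀ x, φ x • h x = (VectorFourier.fourierIntegral Real.fourierChar volume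
      (innerₗ (EuclideanSpace ℝ (Fin n))) (⇑Ψ) x) • h x := by
    intro x
    have : VectorFourier.fourierIntegral Real.fourierChar volume
        (innerₗ (EuclideanSpace ℝ (Fin n))) (⇑Ψ) x = Φ x := by
      rw [show VectorFourier.fourierIntegral Real.fourierChar volume
        (innerₗ (EuclideanSpace ℝ (Fin n))) (⇑Ψ) = FourierTransform.fourier (⇑Ψ) from rfl, hΨ]
    rw [this, hΦ]
    show φ x • h x = ((φ x : ℂ)) • h x
    rw [Complex.coe_smul]
  rw [show ∫ x, φ x • h x = ∫ x, (VectorFourier.fourierIntegral Real.fourierChar volume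
      (innerₗ (EuclideanSpace ℝ (Fin n))) (⇑Ψ) x) • h x from by simp_rw [this]]
  exact key

def permIso {n : ℕ} (σ : Equiv.Perm (Fin n)) :
    EuclideanSpace ℝ (Fin n) ≃ₗᵢ[ℝ] EuclideanSpace ℝ (Fin n) :=
  LinearIsometryEquiv.piLpCongrLeft 2 ℝ ℝ σ.symm

lemma permIso_apply {n : ℕ} (σ : Equiv.Perm (Fin n)) (x : EuclideanSpace ℝ (Fin n)) :
    permIso σ x = WithLp.toLp 2 (fun i => x (σ i)) := rfl

lemma mul_exp_integrable {n : ℕ} {h : EuclideanSpace ℝ (Fin n) → ℂ} (hint : Integrable h)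
    (x : EuclideanSpace ℝ (Fin n)) :
    Integrable (fun ξ => h ξ * Complex.exp (Complex.I * ((⟪x, ξ⟫ : ℝ) : ℂ))) := by
  have hb : Continuous fun ξ : EuclideanSpace ℝ (Fin n) =>
      Complex.exp (Complex.I * ((⟪x, ξ⟫ : ℝ) : ℂ)) :=
    Complex.continuous_exp.comp (continuous_const.mul
      (Complex.continuous_ofReal.comp (continuous_const.inner continuous_id)))
  have := Integrable.bdd_mul hint hb.aestronglyMeasurable
    (ae_of_all _ fun ξ => le_of_eq (exp_norm_one _))
  exact this.congr (ae_of_all _ fun ξ => mul_comm _ _)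

lemma ghat_perm {n : ℕ} {ghat : EuclideanSpace ℝ (Fin n) → ℂ} (hghat : Integrable ghat)
    {g : SchwartzMap (EuclideanSpace ℝ (Fin n)) ℂ}
    (hrep : ∀ x : EuclideanSpace ℝ (Fin n),
      g x = ∫ ξ : EuclideanSpace ℝ (Fin n),
        ghat ξ * Complex.exp (Complex.I * ((⟪x, ξ⟫ : ℝ) : ℂ)))
    (hsym : ∀ (σ : Equiv.Perm (Fin n)) (x : EuclideanSpace ℝ (Fin n)),
          g (WithLp.toLp 2 (fun i => x (σ i))) = g x)
    (σ : Equiv.Perm (Fin n)) :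
    (fun ξ => ghat (permIso σ ξ)) =ᵐ[volume] ghat := by
  have hmp := (permIso σ).measurePreserving
  have hemb := (permIso σ).toHomeomorph.toMeasurableEquiv.measurableEmbedding
  have hcomp : ∀ (G : EuclideanSpace ℝ (Fin n) → ℂ),
      ∫ ξ, G (permIso σ ξ) = ∫ ξ, G ξ := fun G => hmp.integral_comp hemb G
  have hint2 : Integrable (fun ξ => ghat (permIso σ ξ)) :=
    (hmp.integrable_comp_emb hemb).2 hghat
  have hsym2 : ∀ x, ∫ ξ, ghat (permIso σ ξ) * Complex.exp (Complex.I * ((⟪x, ξ⟫ : ℝ) : ℂ))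
      = ∫ ξ, ghat ξ * Complex.exp (Complex.I * ((⟪x, ξ⟫ : ℝ) : ℂ)) := by
    intro x
    have e1 : (fun ξ => ghat (permIso σ ξ) * Complex.exp (Complex.I * ((⟪x, ξ⟫ : ℝ) : ℂ)))
        = fun ξ => (fun ζ => ghat ζ *
            Complex.exp (Complex.I * ((⟪permIso σ x, ζ⟫ : ℝ) : ℂ))) (permIso σ ξ) := by
      funext ξ
      simp only
      rw [(permIso σ).inner_map_map]
    rw [e1, hcomp (fun ζ => ghat ζ * Complex.exp (Complex.I * ((⟪permIso σ x, ζ⟫ : ℝ) : ℂ))),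
      ← hrep (permIso σ x), ← hrep x, permIso_apply]
    exact hsym σ x
  have hdiffint : Integrable (fun ξ => ghat (permIso σ ξ) - ghat ξ) := hint2.sub hghat
  have hz : ∀ x : EuclideanSpace ℝ (Fin n), ∫ ξ, (ghat (permIso σ ξ) - ghat ξ) *
      Complex.exp (Complex.I * ((⟪x, ξ⟫ : ℝ) : ℂ)) = 0 := by
    intro x
    simp_rw [sub_mul]
    rw [MeasureTheory.integral_sub (mul_exp_integrable hint2 x) (mul_exp_integrable hghat x),
      hsym2 x, sub_self]
  have hae := fourier_inj hdiffint hz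
  filter_upwards [hae] with ξ hξ
  exact sub_eq_zero.mp hξ

lemma extFun_perm {n : ℕ} {M : ℝ} {ghat : EuclideanSpace ℝ (Fin n) → ℂ}
    (σ : Equiv.Perm (Fin n))
    (hae : (fun ξ => ghat (permIso σ ξ)) =ᵐ[volume] ghat)
    (x : EuclideanSpace ℝ (Fin n)) (t : ℝ) :
    (∫ ζ : EuclideanSpace ℝ (Fin n) × ℝ, extKernel M ghat ζ *
        Complex.exp (Complex.I * (((⟪permIso σ x, ζ.1⟫ + t * ζ.2 : ℝ)) : ℂ)))
      = ∫ ζ : EuclideanSpace ℝ (Fin n) × ℝ, extKernel M ghat ζ *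
        Complex.exp (Complex.I * (((⟪x, ζ.1⟫ + t * ζ.2 : ℝ)) : ℂ)) := by
  have hmpP : MeasurePreserving (Prod.map (⇑(permIso σ)) (id : ℝ → ℝ))
      (volume.prod volume) (volume.prod volume) :=
    (permIso σ).measurePreserving.prod (MeasurePreserving.id _)
  have hembP : MeasurableEmbedding (Prod.map (⇑(permIso σ)) (id : ℝ → ℝ)) :=
    ((permIso σ).toHomeomorph.toMeasurableEquiv.prodCongr (MeasurableEquiv.refl ℝ)).measurableEmbedding
  rw [MeasureTheory.Measure.volume_eq_prod]
  have hc := hmpP.integral_comp hembP (fun ζ : EuclideanSpace ℝ (Fin n) × ℝ =>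
    extKernel M ghat ζ *
      Complex.exp (Complex.I * (((⟪permIso σ x, ζ.1⟫ + t * ζ.2 : ℝ)) : ℂ)))
  rw [← hc]
  apply integral_congr_ae
  have hae2 : (fun ζ : EuclideanSpace ℝ (Fin n) × ℝ => ghat (permIso σ ζ.1))
      =ᵐ[volume.prod volume] (fun ζ => ghat ζ.1) :=
    Measure.quasiMeasurePreserving_fst.ae_eq_comp hae
  filter_upwards [hae2] with ζ hζ
  show extKernel M ghat (permIso σ ζ.1, ζ.2) *
      Complex.exp (Complex.I * (((⟪permIso σ x, permIso σ ζ.1⟫ + t * ζ.2 : ℝ)) : ℂ)) = _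
  rw [(permIso σ).inner_map_map]
  unfold extKernel
  dsimp only
  rw [(permIso σ).norm_map, hζ]

/-- The explicit Fourier-side extension of a Schwartz function `g` is well defined, its trace on
the hyperplane `{x_{n+1} = 0}` equals `g`, and it is symmetric in the first `n` variables as soon
as `g` is symmetric. -/
theorem stmt9 (n : ℕ) (hn : 1 ≤ n) (M : ℝ) (hM : 0 < M)
    (g : SchwartzMap (EuclideanSpace ℝ (Fin n)) ℂ)
    (ghat : EuclideanSpace ℝ (Fin n) → ℂ) (hghat : Integrable ghat)
    (hrep : ∀ x : EuclideanSpace ℝ (Fin n),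
      g x = ∫ ξ : EuclideanSpace ℝ (Fin n),
        ghat ξ * Complex.exp (Complex.I * ((⟪x, ξ⟫ : ℝ) : ℂ))) :
    (∀ (x : EuclideanSpace ℝ (Fin n)) (t : ℝ),
      Integrable (fun ζ : EuclideanSpace ℝ (Fin n) × ℝ =>
        extKernel M ghat ζ * Complex.exp (Complex.I * (((⟪x, ζ.1⟫ + t * ζ.2 : ℝ)) : ℂ))))
    ∧ (∀ x : EuclideanSpace ℝ (Fin n), extFun M ghat x 0 = g x)
    ∧ ((∀ (σ : Equiv.Perm (Fin n)) (x : EuclideanSpace ℝ (Fin n)),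
          g (WithLp.toLp 2 (fun i => x (σ i))) = g x) →
        ∀ (σ : Equiv.Perm (Fin n)) (x : EuclideanSpace ℝ (Fin n)) (t : ℝ),
          extFun M ghat (WithLp.toLp 2 (fun i => x (σ i))) t = extFun M ghat x t) := by
  refine ⟨fun x t => main_integrable hM hghat x t, fun x => ?_, fun hsym σ x t => ?_⟩
  · rw [hrep x]
    exact trace_eq hM hghat x
  · have hae := ghat_perm hghat hrep hsym σ
    have h1 : extFun M ghat (WithLp.toLp 2 (fun i => x (σ i))) t = extFun M ghat (permIso σ x) t := by
      rw [permIso_apply]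
    rw [h1]
    exact extFun_perm σ hae x t
end
end

section
/- Let φ : [0,1] → ℝ be twice continuously differentiable with φ(t) > 0 for all t ∈ [0,1] and φ'(1) = 0, and define the gain function 𝒢(t) = −t (φ'(t) + t φ''(t)) / φ(t). If 𝒢(t) ≥ 0 for every t ∈ [0,1], then φ' vanishes identically on [0,1], and consequently 𝒢 ≡ 0 on [0,1]. In particular, there is no function φ satisfying these conditions for which 𝒢 is strictly positive at every point of (0,1]. -/
open MeasureTheory

noncomputable section

/-- The gain function `𝒢(t) = −t (φ'(t) + t φ''(t)) / φ(t)` of the Stein estimator built from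
`φ`, with the derivatives taken within `[0,1]`. -/
def gainFun (φ : ℝ → ℝ) (t : ℝ) : ℝ :=
  -t * (derivWithin φ (Set.Icc 0 1) t +
      t * derivWithin (derivWithin φ (Set.Icc 0 1)) (Set.Icc 0 1) t) / φ t

/-- If `φ : [0,1] → ℝ` is `C²`, positive, satisfies `φ'(1) = 0` and its gain function `𝒢` is
nonnegative on `[0,1]`, then `φ'` vanishes identically on `[0,1]` and `𝒢 ≡ 0` on `[0,1]`; in
particular `𝒢` cannot be strictly positive at every point of `(0,1]`. -/
theorem stmt13 (φ : ℝ → ℝ) (hφ : ContDiffOn ℝ 2 φ (Set.Icc 0 1))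
    (hpos : ∀ t ∈ Set.Icc (0 : ℝ) 1, 0 < φ t)
    (hd1 : derivWithin φ (Set.Icc 0 1) 1 = 0)
    (hG : ∀ t ∈ Set.Icc (0 : ℝ) 1, 0 ≤ gainFun φ t) :
    (∀ t ∈ Set.Icc (0 : ℝ) 1, derivWithin φ (Set.Icc 0 1) t = 0 ∧ gainFun φ t = 0)
    ∧ ¬ ∀ t ∈ Set.Ioc (0 : ℝ) 1, 0 < gainFun φ t := by
  set s : Set ℝ := Set.Icc 0 1 with hs
  set φ1 : ℝ → ℝ := derivWithin φ s with hφ1def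
  set φ2 : ℝ → ℝ := derivWithin φ1 s with hφ2def
  have hu : UniqueDiffOn ℝ s := uniqueDiffOn_Icc one_pos
  have hφ1 : ContDiffOn ℝ 1 φ1 s := hφ.derivWithin hu (by norm_num)
  have hφ1d : DifferentiableOn ℝ φ1 s := hφ1.differentiableOn one_ne_zero
  -- key inequality: t * (φ1 t + t * φ2 t) ≤ 0 on s
  have hkey : ∀ t ∈ s, t * (φ1 t + t * φ2 t) ≤ 0 := by
    intro t ht
    have hGt := hG t ht
    have hp := hpos t ht
    rw [gainFun] at hGt
    have : 0 ≤ -t * (φ1 t + t * φ2 t) := by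
      by_contra hc
      push_neg at hc
      have := div_neg_of_neg_of_pos hc hp
      linarith
    nlinarith
  -- h t = t * φ1 t
  set h : ℝ → ℝ := fun t => t * φ1 t with hhdef
  have hderiv : ∀ x ∈ s, HasDerivWithinAt h (φ1 x + x * φ2 x) s x := by
    intro x hx
    have d1 : HasDerivWithinAt φ1 (φ2 x) s x := (hφ1d x hx).hasDerivWithinAt
    have := (hasDerivWithinAt_id x s).mul d1
    exact (by simpa [one_mul] using this : HasDerivWithinAt (id * φ1) (φ1 x + x * φ2 x) s x)
  have hcont : ContinuousOn h s := continuousOn_id.mul hφ1.continuousOn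
  have hanti : AntitoneOn h s := by
    apply antitoneOn_of_deriv_nonpos (convex_Icc 0 1) hcont
    · intro x hx
      rw [interior_Icc] at hx
      exact ((hderiv x (Set.mem_Icc_of_Ioo hx)).hasDerivAt
        (Icc_mem_nhds hx.1 hx.2)).differentiableAt.differentiableWithinAt
    · intro x hx
      rw [interior_Icc] at hx
      have hda := (hderiv x (Set.mem_Icc_of_Ioo hx)).hasDerivAt (Icc_mem_nhds hx.1 hx.2)
      rw [hda.deriv]
      have := hkey x (Set.mem_Icc_of_Ioo hx)
      nlinarith [hx.1]
  have h0 : h 0 = 0 := by simp [hhdef]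
  have h1 : h 1 = 0 := by simp [hhdef, ← hφ1def, hd1]
  have hzer : ∀ t ∈ s, h t = 0 := by
    intro t ht
    have l1 : h t ≤ h 0 := by
      simpa using hanti (Set.left_mem_Icc.2 one_pos.le) ht ht.1
    have l2 : h 1 ≤ h t := hanti ht (Set.right_mem_Icc.2 one_pos.le) ht.2
    rw [h0] at l1; rw [h1] at l2; linarith
  have hφ1Ioc : ∀ t ∈ Set.Ioc (0:ℝ) 1, φ1 t = 0 := by
    intro t ht
    have := hzer t ⟨ht.1.le, ht.2⟩
    have htne : t ≠ 0 := ne_of_gt ht.1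
    have h' : t * φ1 t = 0 := by simpa [hhdef] using this
    rcases mul_eq_zero.mp h' with h'' | h''
    · exact absurd h'' htne
    · exact h''
  have hφ10 : φ1 0 = 0 := by
    haveI : (nhdsWithin (0:ℝ) (Set.Ioc 0 1)).NeBot := by
      rw [← mem_closure_iff_nhdsWithin_neBot, closure_Ioc (by norm_num : (0:ℝ) ≠ 1)]
      exact ⟨le_rfl, by norm_num⟩
    have hc : Filter.Tendsto φ1 (nhdsWithin 0 (Set.Ioc 0 1)) (nhds (φ1 0)) := by
      have := (hφ1.continuousOn 0 (Set.left_mem_Icc.2 one_pos.le)).tendsto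
      exact this.mono_left (nhdsWithin_mono _ Set.Ioc_subset_Icc_self)
    have hz : Filter.Tendsto φ1 (nhdsWithin 0 (Set.Ioc 0 1)) (nhds 0) := by
      apply Filter.Tendsto.congr' _ tendsto_const_nhds
      filter_upwards [self_mem_nhdsWithin] with x hx
      exact (hφ1Ioc x hx).symm
    exact tendsto_nhds_unique hc hz
  have hφ1all : ∀ t ∈ s, φ1 t = 0 := by
    intro t ht
    rcases eq_or_lt_of_le ht.1 with h' | h'
    · rw [← h']; exact hφ10
    · exact hφ1Ioc t ⟨h', ht.2⟩
  have hφ2all : ∀ t ∈ s, φ2 t = 0 := by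
    intro t ht
    have : derivWithin φ1 s t = derivWithin (fun _ => (0:ℝ)) s t :=
      derivWithin_congr hφ1all (hφ1all t ht)
    rw [hφ2def, this]; exact congrFun (derivWithin_const _ _) t
  constructor
  · intro t ht
    refine ⟨hφ1all t ht, ?_⟩
    rw [gainFun]
    rw [show derivWithin φ (Set.Icc 0 1) t = φ1 t from rfl,
        show derivWithin (derivWithin φ (Set.Icc 0 1)) (Set.Icc 0 1) t = φ2 t from rfl,
        hφ1all t ht, hφ2all t ht]
    ring
  · intro H
    have h1' := H 1 ⟨one_pos, le_rfl⟩
    have : gainFun φ 1 = 0 := by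
      rw [gainFun]
      rw [show derivWithin φ (Set.Icc 0 1) 1 = φ1 1 from rfl,
          show derivWithin (derivWithin φ (Set.Icc 0 1)) (Set.Icc 0 1) 1 = φ2 1 from rfl,
          hφ1all 1 (Set.right_mem_Icc.2 one_pos.le),
          hφ2all 1 (Set.right_mem_Icc.2 one_pos.le)]
      ring
    linarith
end
end
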